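/- Let k be a field, A a finitely generated commutative k-algebra, σ : A → A a k-algebra involution, and I ⊆ A a σ-stable ideal (σ(I) = I), so that σ induces an involution σ̄ on A/I. Let I_A be the ideal of A generated by {a − σ(a) : a ∈ A}, and let I_{A/I} be the ideal of A/I generated by {x − σ̄(x) : x ∈ A/I}. Assume both I_A and I_{A/I} are invertible ideals (finitely generated projective of rank one over A, resp. over A/I). Then the induced ring homomorphism A^σ → (A/I)^{σ̄} is surjective: every σ̄-fixed element of A/I lifts to a σ-fixed element of A. -/

import Mathlib

/-- The fixed subring `A^σ` of a ring involution `σ`. -/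
def fixedSubring {A : Type*} [CommRing A] (σ : A →+* A) : Subring A where
  carrier := {a | σ a = a}
  mul_mem' := fun {a b} ha hb => by
    simp only [Set.mem_setOf_eq] at *; rw [map_mul, ha, hb]
  one_mem' := by simp only [Set.mem_setOf_eq, map_one]
  add_mem' := fun {a b} ha hb => by
    simp only [Set.mem_setOf_eq] at *; rw [map_add, ha, hb]
  zero_mem' := by simp only [Set.mem_setOf_eq, map_zero]
  neg_mem' := fun {a} ha => by
    simp only [Set.mem_setOf_eq] at *; rw [map_neg, ha]

/-- The ideal `I_A` of `A` generated by `{a - σ a : a ∈ A}`. -/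
def iideal {A : Type*} [CommRing A] (σ : A →+* A) : Ideal A :=
  Ideal.span (Set.range fun a => a - σ a)

/-- An ideal is invertible if it is a finitely generated projective module of rank one. -/
def IsInvertibleIdeal {A : Type*} [CommRing A] (I : Ideal A) : Prop :=
  Module.Finite A I ∧ Module.Projective A I ∧
    ∀ p : PrimeSpectrum A, Module.rankAtStalk (R := A) I p = 1

section Basic

variable {A : Type*} [CommRing A] (σ : A →+* A)

lemma delta_mem_iideal (a : A) : a - σ a ∈ iideal σ :=
  Ideal.subset_span ⟨a, rfl⟩

lemma sigma_mem_iideal (hσ : ∀ a, σ (σ a) = a) {x : A} (hx : x ∈ iideal σ) :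
    σ x ∈ iideal σ := by
  have : iideal σ ≤ (iideal σ).comap σ := by
    rw [iideal, Ideal.span_le]
    rintro _ ⟨a, rfl⟩
    simp only [SetLike.mem_coe, Ideal.mem_comap, map_sub, hσ]
    have : σ a - a = -(a - σ a) := by ring
    rw [this]
    exact neg_mem (delta_mem_iideal σ a)
  exact this hx

/-- A finitely generated `iideal` is generated by finitely many differences. -/
lemma iideal_fg_delta (hfg : (iideal σ).FG) :
    ∃ s : Finset A, iideal σ = Ideal.span ((fun a => a - σ a) '' ↑s) := by
  classical
  obtain ⟨t, ht⟩ := hfg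
  -- each generator lies in the span of finitely many elements of the range
  have h1 : ∀ g ∈ t, ∃ u : Finset A,
      g ∈ Ideal.span ((fun a => a - σ a) '' ↑u) := by
    intro g hg
    have hgmem : g ∈ iideal σ := ht ▸ Ideal.subset_span hg
    rw [iideal] at hgmem
    obtain ⟨T, hT, hgT⟩ := Submodule.mem_span_finite_of_mem_span hgmem
    -- T ⊆ range δ, finite; choose preimages
    have : ∀ x ∈ T, ∃ a : A, a - σ a = x := fun x hx => hT hx
    choose pre hpre using this
    refine ⟨T.attach.image fun x => pre x.1 x.2, ?_⟩
    refine Submodule.span_mono ?_ hgT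
    intro x hx
    refine ⟨pre x hx, ?_, hpre x hx⟩
    rw [Finset.coe_image]
    exact ⟨⟨x, hx⟩, Finset.mem_attach _ _, rfl⟩
  choose u hu using h1
  refine ⟨t.attach.biUnion fun g => u g.1 g.2, le_antisymm ?_ ?_⟩
  · rw [← ht, Ideal.span_le]
    intro g hg
    refine Submodule.span_mono ?_ (hu g hg)
    intro x hx
    obtain ⟨a, ha, rfl⟩ := hx
    refine ⟨a, ?_, rfl⟩
    rw [Finset.coe_biUnion]
    exact Set.mem_biUnion (Finset.mem_attach _ ⟨g, hg⟩) ha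
  · rw [iideal, Ideal.span_le]
    rintro _ ⟨a, _, rfl⟩
    exact delta_mem_iideal σ a

/-- Dual basis for a finite projective module. -/
lemma exists_dual_basis {M : Type*} [AddCommGroup M] [Module A M]
    [Module.Finite A M] [Module.Projective A M] :
    ∃ (n : ℕ) (x : Fin n → M) (f : Fin n → (M →ₗ[A] A)),
      ∀ z : M, ∑ i, f i z • x i = z := by
  classical
  obtain ⟨n, π, hπ⟩ := Module.Finite.exists_fin' A M
  obtain ⟨s, hs⟩ := Module.projective_lifting_property π LinearMap.id hπ
  refine ⟨n, fun i => π ((Pi.single i 1 : Fin n → A)), fun i => (LinearMap.proj i) ∘ₗ s, fun z => ?_⟩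
  have h1 : (s z : Fin n → A) = ∑ i, s z i • (Pi.single i 1 : Fin n → A) := by
    ext j
    rw [Finset.sum_apply]
    simp [Pi.single_apply, eq_comm]
  have h2 : π (s z) = z := by
    have := congrArg (fun g => g z) hs
    simpa using this
  calc ∑ i, ((LinearMap.proj i ∘ₗ s) z) • π ((Pi.single i 1 : Fin n → A))
      = ∑ i, π (s z i • (Pi.single i 1 : Fin n → A)) := by
        refine Finset.sum_congr rfl fun i _ => ?_
        rw [map_smul]; rfl
    _ = π (∑ i, s z i • (Pi.single i 1 : Fin n → A)) := (map_sum π _ _).symm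
    _ = z := by rw [← h1, h2]

end Basic



section RankOne

variable {A : Type*} [CommRing A]

lemma annihilator_nilpotent_of_rankOne (J : Ideal A) [Module.Finite A J]
    (hrank : ∀ p : PrimeSpectrum A, Module.rankAtStalk (R := A) J p = 1)
    (r : A) (hr : ∀ x ∈ J, r * x = 0) : IsNilpotent r := by
  by_contra hnil
  have hmem : r ∉ nilradical A := by simpa [mem_nilradical] using hnil
  rw [nilradical_eq_sInf, Ideal.mem_sInf] at hmem
  push_neg at hmem
  obtain ⟨p, hp, hrp⟩ := hmem
  haveI : p.IsPrime := hp
  haveI hsub : Subsingleton (LocalizedModule p.primeCompl ↥J) := by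
    rw [subsingleton_iff_forall_eq 0]
    intro z
    induction z using LocalizedModule.induction_on with
    | h m s =>
      rw [← LocalizedModule.zero_mk s, LocalizedModule.mk_eq]
      refine ⟨⟨r, hrp⟩, ?_⟩
      rw [smul_zero, smul_zero]
      ext
      simp only [SetLike.val_smul, Submonoid.smul_def, smul_eq_mul, ZeroMemClass.coe_zero]
      exact hr _ (J.mul_mem_left _ m.2)
  have h0 : Module.rankAtStalk (R := A) J ⟨p, hp⟩ = 0 :=
    Module.finrank_zero_of_subsingleton
  rw [hrank ⟨p, hp⟩] at h0
  exact one_ne_zero h0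

lemma swap_of_rankOne (J : Ideal A) [Module.Finite A ↥J] [Module.Projective A ↥J]
    (hrank : ∀ p : PrimeSpectrum A, Module.rankAtStalk (R := A) J p = 1)
    (f : ↥J →ₗ[A] A) (x y : ↥J) : f x • y = f y • x := by
  have key : (f x • y - f y • x : ↥J) = 0 := by
    refine Module.eq_zero_of_localization_maximal
      (fun (P : Ideal A) (_ : P.IsMaximal) => LocalizedModule P.primeCompl ↥J)
      (fun (P : Ideal A) (_ : P.IsMaximal) => LocalizedModule.mkLinearMap P.primeCompl ↥J)
      (f x • y - f y • x) ?_
    intro P hP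
    set Rp := Localization.AtPrime P with hRp
    set Jp := LocalizedModule P.primeCompl ↥J with hJp
    haveI : Module.Projective Rp Jp :=
      Module.projective_of_isLocalizedModule P.primeCompl (LocalizedModule.mkLinearMap P.primeCompl ↥J)
    haveI : Module.Finite Rp Jp :=
      Module.Finite.of_isLocalizedModule P.primeCompl (LocalizedModule.mkLinearMap P.primeCompl ↥J)
    haveI : Module.FinitePresentation Rp Jp := Module.finitePresentation_of_projective _ _
    haveI : Module.Free Rp Jp := Module.free_of_flat_of_isLocalRing
    have hfr : Module.finrank Rp Jp = 1 := hrank ⟨P, hP.isPrime⟩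
    classical
    set ι := Module.Free.ChooseBasisIndex Rp Jp with hι
    set b := Module.Free.chooseBasis Rp Jp with hb
    have hcard : Fintype.card ι = 1 := by
      rw [← Module.finrank_eq_card_chooseBasisIndex]; exact hfr
    obtain ⟨i₀, hi₀⟩ := Fintype.card_eq_one_iff.mp hcard
    have huniv : (Finset.univ : Finset ι) = {i₀} :=
      Finset.eq_singleton_iff_unique_mem.mpr ⟨Finset.mem_univ _, fun x _ => hi₀ x⟩
    have hexp : ∀ m : Jp, m = b.repr m i₀ • b i₀ := fun m => by
      conv_lhs => rw [← b.sum_repr m]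
      rw [huniv, Finset.sum_singleton]
    -- the localized functional
    set F : Jp →ₗ[A] Rp := IsLocalizedModule.map P.primeCompl
      (LocalizedModule.mkLinearMap P.primeCompl ↥J) (Algebra.linearMap A Rp) f with hF
    set F' : Jp →ₗ[Rp] Rp := LinearMap.extendScalarsOfIsLocalization P.primeCompl Rp F with hF'
    have hFmk : ∀ z : ↥J, algebraMap A Rp (f z) =
        F' (LocalizedModule.mkLinearMap P.primeCompl ↥J z) := by
      intro z
      rw [hF', LinearMap.extendScalarsOfIsLocalization_apply', hF,
        IsLocalizedModule.map_apply]
      rfl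
    have hsmul : ∀ (a : A) (z : ↥J), LocalizedModule.mkLinearMap P.primeCompl ↥J (a • z)
        = algebraMap A Rp a • LocalizedModule.mkLinearMap P.primeCompl ↥J z := by
      intro a z
      rw [map_smul, algebraMap_smul]
    rw [map_sub, hsmul, hsmul, hFmk, hFmk]
    set X := LocalizedModule.mkLinearMap P.primeCompl ↥J x
    set Y := LocalizedModule.mkLinearMap P.primeCompl ↥J y
    rw [hexp X, hexp Y]
    simp only [map_smul, smul_eq_mul, smul_smul]
    rw [show (b.repr X) i₀ * F' (b i₀) * (b.repr Y) i₀ = (b.repr Y) i₀ * F' (b i₀) * (b.repr X) i₀ by ring]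
    rw [sub_self]
  have := sub_eq_zero.mp key
  exact this

lemma sym_of_swap (J : Ideal A) {n : ℕ} (x : Fin n → ↥J) (f : Fin n → (↥J →ₗ[A] A))
    (hdb : ∀ z : ↥J, ∑ i, f i z • x i = z)
    (hswap : ∀ (g : ↥J →ₗ[A] A) (u v : ↥J), g u • v = g v • u)
    (u v : ↥J) : u ⊗ₜ[A] v = v ⊗ₜ[A] u := by
  classical
  let m : (↥J →ₗ[A] A) → (TensorProduct A ↥J ↥J →ₗ[A] ↥J) := fun g =>
    TensorProduct.lift ((LinearMap.lsmul A ↥J) ∘ₗ g)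
  have hid : (∑ i, (TensorProduct.mk A ↥J ↥J (x i)) ∘ₗ (m (f i))) = LinearMap.id := by
    apply TensorProduct.ext'
    intro a c
    simp only [LinearMap.sum_apply, LinearMap.comp_apply, LinearMap.id_apply]
    have h1 : ∀ i, (TensorProduct.mk A ↥J ↥J (x i)) ((m (f i)) (a ⊗ₜ[A] c))
        = (f i a • x i) ⊗ₜ[A] c := by
      intro i
      simp only [m, TensorProduct.lift.tmul, LinearMap.comp_apply, LinearMap.lsmul_apply,
        TensorProduct.mk_apply]
      rw [TensorProduct.smul_tmul]
    rw [Finset.sum_congr rfl fun i _ => h1 i, ← TensorProduct.sum_tmul, hdb]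
  have hω : ∀ ω : TensorProduct A ↥J ↥J, ∑ i, (TensorProduct.mk A ↥J ↥J (x i)) ((m (f i)) ω) = ω := by
    intro ω
    have := congrArg (fun g => g ω) hid
    simpa using this
  have hzero : ∀ i, (m (f i)) (u ⊗ₜ[A] v - v ⊗ₜ[A] u) = 0 := by
    intro i
    simp only [map_sub, m, TensorProduct.lift.tmul, LinearMap.comp_apply, LinearMap.lsmul_apply]
    rw [hswap (f i) u v, sub_self]
  have := hω (u ⊗ₜ[A] v - v ⊗ₜ[A] u)
  rw [Finset.sum_congr rfl fun i _ => by rw [hzero i]] at this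
  simp only [map_zero, Finset.sum_const_zero] at this
  exact sub_eq_zero.mp this.symm

lemma swap_of_sym (J : Ideal A)
    (hsym : ∀ u v : ↥J, u ⊗ₜ[A] v = v ⊗ₜ[A] u)
    (g : ↥J →ₗ[A] A) (u v : ↥J) : g u • v = g v • u := by
  have := congrArg (TensorProduct.lift ((LinearMap.lsmul A ↥J) ∘ₗ g)) (hsym u v)
  simpa only [TensorProduct.lift.tmul, LinearMap.comp_apply, LinearMap.lsmul_apply] using this

end RankOne




section Transfer

variable {A A' : Type*} [CommRing A] [CommRing A'] [Algebra A A']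
variable (σ : A →+* A) (σ' : A' →+* A')

lemma iideal_map_le (hcomm : ∀ a : A, σ' (algebraMap A A' a) = algebraMap A A' (σ a)) :
    ∀ x ∈ iideal σ, algebraMap A A' x ∈ iideal σ' := by
  intro x hx
  have : iideal σ ≤ (iideal σ').comap (algebraMap A A' : A →+* A') := by
    rw [iideal, Ideal.span_le]
    rintro _ ⟨a, rfl⟩
    simp only [SetLike.mem_coe, Ideal.mem_comap, map_sub]
    rw [← hcomm]
    exact delta_mem_iideal σ' (algebraMap A A' a)
  exact this hx

variable (hcomm : ∀ a : A, σ' (algebraMap A A' a) = algebraMap A A' (σ a))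
variable (hsurj : ∀ z : A', ∃ (y : A) (v : A'),
    IsUnit v ∧ σ' v = v ∧ z = v * algebraMap A A' y)

include hcomm hsurj in
lemma iideal_span_transfer (s : Finset A)
    (hs : iideal σ = Ideal.span ((fun a => a - σ a) '' ↑s)) :
    ∃ s' : Finset A', iideal σ' = Ideal.span ((fun z => z - σ' z) '' ↑s') := by
  classical
  refine ⟨s.image (algebraMap A A'), ?_⟩
  apply le_antisymm
  · rw [iideal, Ideal.span_le]
    rintro _ ⟨y, rfl⟩
    obtain ⟨x, v, hv, hfix, rfl⟩ := hsurj y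
    have hδ : v * algebraMap A A' x - σ' (v * algebraMap A A' x)
        = v * (algebraMap A A' (x - σ x)) := by
      rw [map_mul, hfix, hcomm, map_sub, mul_sub]
    simp only [SetLike.mem_coe]
    rw [hδ]
    have hxs : algebraMap A A' (x - σ x) ∈ Ideal.span ((fun z => z - σ' z) ''
        ↑(s.image (algebraMap A A'))) := by
      have hmem : x - σ x ∈ iideal σ := delta_mem_iideal σ x
      rw [hs] at hmem
      have hle : Ideal.span ((fun a => a - σ a) '' ↑s) ≤
          Ideal.comap (algebraMap A A' : A →+* A')
            (Ideal.span ((fun z => z - σ' z) '' ↑(s.image (algebraMap A A')))) := by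
        rw [Ideal.span_le]
        rintro _ ⟨b, hb, rfl⟩
        simp only [SetLike.mem_coe, Ideal.mem_comap, map_sub]
        rw [← hcomm]
        exact Ideal.subset_span ⟨algebraMap A A' b, by
          rw [Finset.coe_image]; exact ⟨b, hb, rfl⟩, rfl⟩
      exact hle hmem
    exact Ideal.mul_mem_left _ v hxs
  · rw [Ideal.span_le]
    rintro _ ⟨z, _, rfl⟩
    exact delta_mem_iideal σ' z

include hcomm hsurj in
lemma sym_transfer
    (hsym : ∀ u v : ↥(iideal σ), u ⊗ₜ[A] v = v ⊗ₜ[A] u) :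
    ∀ u v : ↥(iideal σ'), u ⊗ₜ[A'] v = v ⊗ₜ[A'] u := by
  classical
  set J := iideal σ with hJ
  set J' := iideal σ' with hJ'
  have hmem : ∀ x ∈ J, algebraMap A A' x ∈ J' := iideal_map_le σ σ' hcomm
  set φ := algebraMap A A' with hφ
  -- base-pair symmetry via an additive lift
  have hbase : ∀ x y : ↥J,
      (⟨φ x, hmem _ x.2⟩ : ↥J') ⊗ₜ[A'] (⟨φ y, hmem _ y.2⟩ : ↥J')
      = (⟨φ y, hmem _ y.2⟩ : ↥J') ⊗ₜ[A'] (⟨φ x, hmem _ x.2⟩ : ↥J') := by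
    intro x y
    let g : ↥J → ↥J' := fun u => ⟨φ u, hmem _ u.2⟩
    have hg0 : g 0 = 0 := by ext; simp [g]
    have hgadd : ∀ u w : ↥J, g (u + w) = g u + g w := by
      intro u w; ext; simp [g, map_add]
    have hgsmul : ∀ (r : A) (u : ↥J), g (r • u) = φ r • g u := by
      intro r u; ext
      simp only [g, SetLike.val_smul, smul_eq_mul, map_mul]
    let inner : ↥J → (↥J →+ TensorProduct A' ↥J' ↥J') := fun u =>
      { toFun := fun v => g u ⊗ₜ[A'] g v
        map_zero' := by
          show g u ⊗ₜ[A'] g 0 = 0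
          rw [hg0, TensorProduct.tmul_zero]
        map_add' := fun v w => by
          show g u ⊗ₜ[A'] g (v + w) = g u ⊗ₜ[A'] g v + g u ⊗ₜ[A'] g w
          rw [hgadd, TensorProduct.tmul_add] }
    let fbil : ↥J →+ (↥J →+ TensorProduct A' ↥J' ↥J') :=
      { toFun := inner
        map_zero' := by
          ext v
          show g 0 ⊗ₜ[A'] g v = 0
          rw [hg0, TensorProduct.zero_tmul]
        map_add' := fun u w => by
          ext v
          show g (u + w) ⊗ₜ[A'] g v = g u ⊗ₜ[A'] g v + g w ⊗ₜ[A'] g v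
          rw [hgadd, TensorProduct.add_tmul] }
    have hbal' : ∀ (r : A) (u v : ↥J), (fbil (r • u)) v = (fbil u) (r • v) := by
      intro r u v
      show g (r • u) ⊗ₜ[A'] g v = g u ⊗ₜ[A'] g (r • v)
      rw [hgsmul, hgsmul, TensorProduct.smul_tmul]
    let Φ : TensorProduct A ↥J ↥J →+ TensorProduct A' ↥J' ↥J' :=
      TensorProduct.liftAddHom fbil hbal'
    have hΦ : ∀ u v : ↥J, Φ (u ⊗ₜ[A] v) = g u ⊗ₜ[A'] g v := fun u v =>
      TensorProduct.liftAddHom_tmul fbil hbal' u v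
    have := congrArg Φ (hsym x y)
    rw [hΦ, hΦ] at this
    exact this
  set T₀ : Set A' := Set.range (fun y : A => φ (y - σ y)) with hT₀
  have hTJ : Ideal.span T₀ ≤ J' := by
    rw [Ideal.span_le]
    rintro _ ⟨y, rfl⟩
    exact hmem _ (delta_mem_iideal σ y)
  have hspan : ∀ z ∈ J', z ∈ Ideal.span T₀ := by
    intro z hz
    rw [hJ', iideal] at hz
    have hle : Ideal.span (Set.range fun a => a - σ' a) ≤ Ideal.span T₀ := by
      rw [Ideal.span_le]
      rintro _ ⟨y, rfl⟩
      obtain ⟨x, v, hv, hfix, rfl⟩ := hsurj y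
      have hδ : v * φ x - σ' (v * φ x) = v * (φ (x - σ x)) := by
        rw [map_mul, hfix, hcomm, map_sub, mul_sub]
      simp only [SetLike.mem_coe]
      rw [hδ]
      exact Ideal.mul_mem_left _ v (Ideal.subset_span ⟨x, rfl⟩)
    exact hle hz
  have claim1 : ∀ (y : A) (w : A') (hw : w ∈ J'),
      (⟨φ (y - σ y), hmem _ (delta_mem_iideal σ y)⟩ : ↥J') ⊗ₜ[A'] (⟨w, hw⟩ : ↥J')
      = (⟨w, hw⟩ : ↥J') ⊗ₜ[A'] (⟨φ (y - σ y), hmem _ (delta_mem_iideal σ y)⟩ : ↥J') := by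
    intro y w hw
    have hw0 : w ∈ Ideal.span T₀ := hspan w hw
    revert hw
    induction hw0 using Submodule.span_induction with
    | mem x hx =>
      obtain ⟨y', rfl⟩ := hx
      intro hw
      exact hbase ⟨y - σ y, delta_mem_iideal σ y⟩ ⟨y' - σ y', delta_mem_iideal σ y'⟩
    | zero =>
      intro hw
      have h0 : (⟨(0:A'), hw⟩ : ↥J') = 0 := rfl
      rw [h0, TensorProduct.tmul_zero, TensorProduct.zero_tmul]
    | add x z hx hz ihx ihz =>
      intro hw
      have hxJ : x ∈ J' := hTJ hx
      have hzJ : z ∈ J' := hTJ hz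
      have hsum : (⟨x + z, hw⟩ : ↥J') = ⟨x, hxJ⟩ + ⟨z, hzJ⟩ := rfl
      rw [hsum, TensorProduct.tmul_add, TensorProduct.add_tmul, ihx hxJ, ihz hzJ]
    | smul a x hx ih =>
      intro hw
      have hxJ : x ∈ J' := hTJ hx
      have hsm : (⟨a • x, hw⟩ : ↥J') = a • (⟨x, hxJ⟩ : ↥J') := rfl
      rw [hsm, TensorProduct.tmul_smul, ih hxJ, TensorProduct.smul_tmul']
  have claim2 : ∀ (z : A') (hz : z ∈ J') (w : A') (hw : w ∈ J'),
      (⟨z, hz⟩ : ↥J') ⊗ₜ[A'] (⟨w, hw⟩ : ↥J') = (⟨w, hw⟩ : ↥J') ⊗ₜ[A'] (⟨z, hz⟩ : ↥J') := by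
    intro z hz
    have hz0 : z ∈ Ideal.span T₀ := hspan z hz
    revert hz
    induction hz0 using Submodule.span_induction with
    | mem x hx =>
      obtain ⟨y, rfl⟩ := hx
      intro hz w hw
      exact claim1 y w hw
    | zero =>
      intro hz w hw
      have h0 : (⟨(0:A'), hz⟩ : ↥J') = 0 := rfl
      rw [h0, TensorProduct.tmul_zero, TensorProduct.zero_tmul]
    | add x z' hx hz' ihx ihz =>
      intro hz w hw
      have hxJ : x ∈ J' := hTJ hx
      have hzJ : z' ∈ J' := hTJ hz'
      have hsum : (⟨x + z', hz⟩ : ↥J') = ⟨x, hxJ⟩ + ⟨z', hzJ⟩ := rfl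
      rw [hsum, TensorProduct.add_tmul, TensorProduct.tmul_add, ihx hxJ w hw, ihz hzJ w hw]
    | smul a x hx ih =>
      intro hz w hw
      have hxJ : x ∈ J' := hTJ hx
      have hsm : (⟨a • x, hz⟩ : ↥J') = a • (⟨x, hxJ⟩ : ↥J') := rfl
      rw [hsm, ← TensorProduct.smul_tmul', ih hxJ w hw, TensorProduct.tmul_smul]
  intro u v
  have := claim2 u.1 u.2 v.1 v.2
  simpa using this

include hcomm hsurj in
lemma c1_transfer
    (hzero : ∀ a : A, algebraMap A A' a = 0 →
      ∃ t : A, IsUnit (algebraMap A A' t) ∧ t * a = 0)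
    (s : Finset A) (hs : iideal σ = Ideal.span ((fun a => a - σ a) '' ↑s))
    (hC1 : ∀ r : A, (∀ x ∈ iideal σ, r * x = 0) → IsNilpotent r) :
    ∀ r' : A', (∀ x ∈ iideal σ', r' * x = 0) → IsNilpotent r' := by
  classical
  intro r' hr'
  obtain ⟨x, v, hv, hfix, rfl⟩ := hsurj r'
  set φ := algebraMap A A' with hφ
  have hkill : ∀ b ∈ s, φ (x * (b - σ b)) = 0 := by
    intro b hb
    have h1 : φ (b - σ b) ∈ iideal σ' := iideal_map_le σ σ' hcomm _ (delta_mem_iideal σ b)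
    have h2 : (v * φ x) * φ (b - σ b) = 0 := hr' _ h1
    have h3 : v * (φ (x * (b - σ b))) = 0 := by
      rw [map_mul]; rw [← h2]; ring
    obtain ⟨vi, hvi⟩ := hv.exists_left_inv
    calc φ (x * (b - σ b)) = (vi * v) * φ (x * (b - σ b)) := by rw [hvi, one_mul]
      _ = vi * (v * φ (x * (b - σ b))) := by ring
      _ = 0 := by rw [h3, mul_zero]
  have hts : ∀ b ∈ s, ∃ t : A, IsUnit (φ t) ∧ t * (x * (b - σ b)) = 0 := by
    intro b hb
    exact hzero _ (hkill b hb)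
  choose tf htu htz using hts
  set t : A := ∏ b ∈ s.attach, tf b.1 b.2 with ht
  have htunit : IsUnit (φ t) := by
    rw [ht, map_prod]
    exact Finset.prod_induction _ IsUnit (fun _ _ => IsUnit.mul) isUnit_one
      (fun b _ => htu b.1 b.2)
  have hkillJ : ∀ w ∈ iideal σ, (t * x) * w = 0 := by
    have hgen : ∀ b ∈ s, (t * x) * (b - σ b) = 0 := by
      intro b hb
      have : t = (∏ c ∈ s.attach.erase ⟨b, hb⟩, tf c.1 c.2) * tf b hb := by
        rw [ht, ← Finset.prod_erase_mul s.attach _ (Finset.mem_attach _ ⟨b, hb⟩)]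
      rw [this]
      calc (∏ c ∈ s.attach.erase ⟨b, hb⟩, tf c.1 c.2) * tf b hb * x * (b - σ b)
          = (∏ c ∈ s.attach.erase ⟨b, hb⟩, tf c.1 c.2) * (tf b hb * (x * (b - σ b))) := by ring
        _ = 0 := by rw [htz b hb, mul_zero]
    intro w hw
    rw [hs] at hw
    have hle : Ideal.span ((fun a => a - σ a) '' ↑s) ≤
        LinearMap.ker (LinearMap.mulLeft A (t * x)) := by
      rw [Ideal.span_le]
      rintro _ ⟨b, hb, rfl⟩
      simp only [SetLike.mem_coe, LinearMap.mem_ker, LinearMap.mulLeft_apply]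
      exact hgen b hb
    have := hle hw
    simp only [LinearMap.mem_ker, LinearMap.mulLeft_apply] at this
    rw [mul_assoc]
    simpa [mul_assoc] using this
  obtain ⟨n, hn⟩ := hC1 (t * x) hkillJ
  refine ⟨n, ?_⟩
  have h1 : φ (t * x) ^ n = 0 := by
    rw [← map_pow, hn, map_zero]
  have h2 : (φ t) ^ n * (φ x) ^ n = 0 := by
    rw [← mul_pow, ← map_mul]; exact h1
  have h3 : (φ x) ^ n = 0 := by
    obtain ⟨w, hw⟩ := (htunit.pow n).exists_left_inv
    calc (φ x) ^ n = (w * (φ t) ^ n) * (φ x) ^ n := by rw [hw, one_mul]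
      _ = w * ((φ t) ^ n * (φ x) ^ n) := by ring
      _ = 0 := by rw [h2, mul_zero]
  calc (v * φ x) ^ n = v ^ n * (φ x) ^ n := by rw [mul_pow]
    _ = 0 := by rw [h3, mul_zero]

end Transfer





section Loc

variable {A A' : Type*} [CommRing A] [CommRing A'] [Algebra A A']
variable (S : Submonoid A) [IsLocalization S A']
variable (σ : A →+* A) (σ' : A' →+* A')
variable (hcomm : ∀ a : A, σ' (algebraMap A A' a) = algebraMap A A' (σ a))
variable (hfixS : ∀ s ∈ S, σ s = s)

include hcomm hfixS in
lemma loc_hsurj : ∀ z : A', ∃ (y : A) (v : A'),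
    IsUnit v ∧ σ' v = v ∧ z = v * algebraMap A A' y := by
  intro z
  obtain ⟨⟨x, s⟩, rfl⟩ := IsLocalization.mk'_surjective S z
  dsimp only
  have hspec : IsLocalization.mk' A' (1:A) s * algebraMap A A' (s:A) = 1 := by
    have := IsLocalization.mk'_spec A' (1:A) s
    simpa using this
  have hunit : IsUnit (IsLocalization.mk' A' (1:A) s) := IsUnit.of_mul_eq_one _ hspec
  have hfix : σ' (IsLocalization.mk' A' (1:A) s) = IsLocalization.mk' A' (1:A) s := by
    have h1 : σ' (IsLocalization.mk' A' (1:A) s) * algebraMap A A' (s:A) = 1 := by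
      have hs : algebraMap A A' (s:A) = σ' (algebraMap A A' (s:A)) := by
        rw [hcomm, hfixS s s.2]
      rw [hs, ← map_mul, hspec, map_one]
    have hu : IsUnit (algebraMap A A' (s:A)) := IsLocalization.map_units A' s
    obtain ⟨w, hw⟩ := hu.exists_right_inv
    calc σ' (IsLocalization.mk' A' (1:A) s)
        = σ' (IsLocalization.mk' A' (1:A) s) * (algebraMap A A' (s:A) * w) := by
          rw [hw, mul_one]
      _ = (σ' (IsLocalization.mk' A' (1:A) s) * algebraMap A A' (s:A)) * w := by ring
      _ = w := by rw [h1, one_mul]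
      _ = (IsLocalization.mk' A' (1:A) s * algebraMap A A' (s:A)) * w := by
          rw [hspec, one_mul]
      _ = IsLocalization.mk' A' (1:A) s * (algebraMap A A' (s:A) * w) := by ring
      _ = IsLocalization.mk' A' (1:A) s := by rw [hw, mul_one]
  refine ⟨x, IsLocalization.mk' A' (1:A) s, hunit, hfix, ?_⟩
  rw [IsLocalization.mk'_eq_mul_mk'_one, mul_comm]

include S in
lemma loc_hzero : ∀ a : A, algebraMap A A' a = 0 →
    ∃ t : A, IsUnit (algebraMap A A' t) ∧ t * a = 0 := by
  intro a ha
  obtain ⟨m, hm⟩ := (IsLocalization.map_eq_zero_iff S A' a).mp ha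
  exact ⟨m, IsLocalization.map_units A' m, hm⟩

lemma mem_localizedIdeal_iff (Q : Ideal A) (z : A') :
    z ∈ Q.localized' A' S (Algebra.linearMap A A') ↔
    ∃ q ∈ Q, ∃ s : S, algebraMap A A' (s:A) * z = algebraMap A A' q := by
  rw [Submodule.mem_localized']
  constructor
  · rintro ⟨q, hq, s, rfl⟩
    refine ⟨q, hq, s, ?_⟩
    have h1 := IsLocalizedModule.mk'_cancel' (Algebra.linearMap A A') q s
    calc algebraMap A A' (s:A) * IsLocalizedModule.mk' (Algebra.linearMap A A') q s
        = (s:A) • IsLocalizedModule.mk' (Algebra.linearMap A A') q s := by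
          rw [Algebra.smul_def]
      _ = algebraMap A A' q := h1
  · rintro ⟨q, hq, s, hsz⟩
    refine ⟨q, hq, s, ?_⟩
    have hu : IsUnit (algebraMap A A' (s:A)) := IsLocalization.map_units A' s
    have h1 := IsLocalizedModule.mk'_cancel' (Algebra.linearMap A A') q s
    have h2 : algebraMap A A' (s:A) * IsLocalizedModule.mk' (Algebra.linearMap A A') q s
        = algebraMap A A' q := by
      rw [← Algebra.smul_def]; exact h1
    apply hu.mul_left_cancel
    rw [h2, hsz]

include hcomm hfixS in
lemma iideal_localized'_eq :
    (iideal σ).localized' A' S (Algebra.linearMap A A') = iideal σ' := by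
  apply le_antisymm
  · intro z hz
    rw [mem_localizedIdeal_iff] at hz
    obtain ⟨q, hq, s, hsz⟩ := hz
    have hspec : IsLocalization.mk' A' (1:A) s * algebraMap A A' (s:A) = 1 := by
      have := IsLocalization.mk'_spec A' (1:A) s
      simpa using this
    have hz' : z = IsLocalization.mk' A' (1:A) s * algebraMap A A' q := by
      calc z = (IsLocalization.mk' A' (1:A) s * algebraMap A A' (s:A)) * z := by
            rw [hspec, one_mul]
        _ = IsLocalization.mk' A' (1:A) s * (algebraMap A A' (s:A) * z) := by ring
        _ = IsLocalization.mk' A' (1:A) s * algebraMap A A' q := by rw [hsz]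
    rw [hz']
    exact Ideal.mul_mem_left _ _ (iideal_map_le σ σ' hcomm _ hq)
  · rw [iideal, Ideal.span_le]
    rintro _ ⟨y, rfl⟩
    obtain ⟨x, v, hv, hfix, rfl⟩ := loc_hsurj S σ σ' hcomm hfixS y
    simp only [SetLike.mem_coe]
    have hδ : v * algebraMap A A' x - σ' (v * algebraMap A A' x)
        = v * algebraMap A A' (x - σ x) := by
      rw [map_mul, hfix, hcomm, map_sub, mul_sub]
    rw [hδ, ← smul_eq_mul]
    apply Submodule.smul_mem
    rw [mem_localizedIdeal_iff]
    exact ⟨x - σ x, delta_mem_iideal σ x, 1, by simp⟩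

include hcomm hfixS in
lemma proj_transfer [Module.Projective A ↥(iideal σ)] :
    Module.Projective A' ↥(iideal σ') := by
  have h : Module.Projective A' ↥((iideal σ).localized' A' S (Algebra.linearMap A A')) :=
    Module.projective_of_isLocalizedModule S
      ((iideal σ).toLocalized' A' S (Algebra.linearMap A A'))
  rw [iideal_localized'_eq S σ σ' hcomm hfixS] at h
  exact h

end Loc

section Core

theorem core_lift {R : Type*} [CommRing R] (τ : R →+* R) (hτ : ∀ x, τ (τ x) = x)
    (hmax : ∀ p q : Ideal R, p.IsMaximal → q.IsMaximal → q = p ∨ q = p.comap τ)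
    (s : Finset R) (hfgδ : iideal τ = Ideal.span ((fun a => a - τ a) '' ↑s))
    (hproj : Module.Projective R ↥(iideal τ))
    (hC1 : ∀ r : R, (∀ x ∈ iideal τ, r * x = 0) → IsNilpotent r)
    (hswap : ∀ (f : ↥(iideal τ) →ₗ[R] R) (x y : ↥(iideal τ)),
      f x • y = f y • x)
    (K : Ideal R) (hK : ∀ x ∈ K, τ x ∈ K)
    {R' : Type*} [CommRing R'] (ψ : R →+* R') (τ' : R' →+* R')
    (hψτ : ∀ x, ψ (τ x) = τ' (ψ x))
    (hker : ∀ x, ψ x = 0 ↔ x ∈ K)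
    (hsurjψ : ∀ z : R', ∃ (y : R) (v : R'), IsUnit v ∧ τ' v = v ∧ z = v * ψ y)
    (hQproj : Module.Projective R' ↥(iideal τ'))
    (hQC1 : ∀ r : R', (∀ x ∈ iideal τ', r * x = 0) → IsNilpotent r)
    (a : R) (hd : a - τ a ∈ K) :
    ∃ t ∈ K, t - τ t = a - τ a := by
  classical
  by_cases htriv : Subsingleton R
  · exact ⟨0, K.zero_mem, Subsingleton.elim _ _⟩
  haveI : Nontrivial R := not_subsingleton_iff_nontrivial.mp htriv
  set J := iideal τ with hJdef
  have hJfg : J.FG := ⟨s.image (fun a => a - τ a), by rw [Finset.coe_image]; exact hfgδ.symm⟩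
  haveI : Module.Finite R ↥J := Module.Finite.iff_fg.mpr hJfg
  obtain ⟨n, xs, fs, hdb⟩ := exists_dual_basis (A := R) (M := ↥J)
  obtain ⟨p₀, hp₀⟩ := Ideal.exists_maximal R
  have hτsurj : Function.Surjective τ := fun y => ⟨τ y, hτ y⟩
  haveI := hp₀
  have hq₀max : (p₀.comap τ).IsMaximal := Ideal.comap_isMaximal_of_surjective τ hτsurj
  set q₀ := p₀.comap τ with hq₀def
  have hjac : p₀ ⊓ q₀ ≤ (⊥ : Ideal R).jacobson := by
    rw [Ideal.jacobson]
    apply le_sInf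
    rintro m ⟨-, hm⟩
    rcases hmax p₀ m hp₀ hm with rfl | rfl
    · exact inf_le_left
    · exact inf_le_right
  -- find generator avoiding p₀ * J
  have hgen : ∀ (m : Ideal R), m.IsMaximal → ∃ b ∈ s, (b - τ b) ∉ m * J := by
    intro m hm
    by_contra hall
    push_neg at hall
    have hle : J ≤ m * J := by
      rw [hfgδ, Ideal.span_le]
      rintro _ ⟨b, hb, rfl⟩
      simp only [SetLike.mem_coe]
      rw [← hfgδ]
      exact hall b hb
    obtain ⟨r, hr1, hr0⟩ :=
      Submodule.exists_sub_one_mem_and_smul_eq_zero_of_fg_of_le_smul m J hJfg hle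
    have hnil : IsNilpotent r := hC1 r (fun x hx => by simpa using hr0 x hx)
    have hrm : r ∈ m := (nilradical_le_prime m) (by rwa [mem_nilradical])
    have h1 : (1 : R) ∈ m := by
      have := m.sub_mem hrm hr1
      simpa using this
    exact hm.ne_top ((Ideal.eq_top_iff_one m).mpr h1)
  obtain ⟨b₀, hb₀s, hb₀⟩ := hgen p₀ hp₀
  set c := b₀ - τ b₀ with hcdef
  have hcJ : c ∈ J := delta_mem_iideal τ b₀
  have hτc : τ c = -c := by rw [hcdef, map_sub, hτ]; ring
  have hcm : ∀ (m : Ideal R), m.IsMaximal → c ∉ m * J := by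
    intro m hm
    rcases hmax p₀ m hp₀ hm with rfl | rfl
    · exact hb₀
    · intro hcm'
      apply hb₀
      have h1 : τ c ∈ Ideal.map τ ((p₀.comap τ) * J) := Ideal.mem_map_of_mem τ hcm'
      rw [Ideal.map_mul] at h1
      have h2 : Ideal.map τ (p₀.comap τ) ≤ p₀ := Ideal.map_comap_le
      have h3 : Ideal.map τ J ≤ J := by
        rw [hJdef, iideal, Ideal.map_span, Ideal.span_le]
        rintro _ ⟨_, ⟨y, rfl⟩, rfl⟩
        exact sigma_mem_iideal τ hτ (delta_mem_iideal τ y)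
      have h4 : τ c ∈ p₀ * J := (Ideal.mul_mono h2 h3) h1
      rw [hτc] at h4
      have := (p₀ * J).neg_mem h4
      simpa using this
  set L : Ideal R := Ideal.span (Set.range fun i => fs i ⟨c, hcJ⟩) with hLdef
  have hLm : ∀ (m : Ideal R), m.IsMaximal → ¬ L ≤ m := by
    intro m hm hLle
    apply hcm m hm
    have hval := congrArg (Subtype.val) (hdb ⟨c, hcJ⟩)
    have hc' : (∑ i, fs i ⟨c, hcJ⟩ * ((xs i : R))) = c := by
      simpa [SetLike.val_smul, smul_eq_mul] using hval
    rw [← hc']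
    apply Ideal.sum_mem
    intro i _
    exact Ideal.mul_mem_mul (hLle (Ideal.subset_span ⟨i, rfl⟩)) (xs i).2
  have hLsup : L ⊔ (p₀ ⊓ q₀) = ⊤ := by
    by_contra hne
    obtain ⟨m, hm, hle⟩ := Ideal.exists_le_maximal _ hne
    exact hLm m hm (le_trans le_sup_left hle)
  have hone : (1 : R) ∈ L ⊔ (p₀ ⊓ q₀) := by rw [hLsup]; exact Submodule.mem_top
  obtain ⟨μ, hμ, w, hw, hμw⟩ := Submodule.mem_sup.mp hone
  have hkey : J ≤ Ideal.span {c} ⊔ (p₀ ⊓ q₀) • J := by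
    intro z hz
    have hμz : μ * z ∈ Ideal.span {c} := by
      have hLsub : L ≤ Submodule.comap (LinearMap.mulLeft R z) (Ideal.span {c}) := by
        rw [hLdef, Ideal.span_le]
        rintro _ ⟨i, rfl⟩
        simp only [SetLike.mem_coe, Submodule.mem_comap, LinearMap.mulLeft_apply]
        have hsw := hswap (fs i) ⟨c, hcJ⟩ ⟨z, hz⟩
        have hval := congrArg (Subtype.val) hsw
        simp only [SetLike.val_smul, smul_eq_mul] at hval
        rw [Ideal.mem_span_singleton']
        exact ⟨fs i ⟨z, hz⟩, by rw [← hval]; ring⟩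
      have := hLsub hμ
      simp only [Submodule.mem_comap, LinearMap.mulLeft_apply] at this
      rwa [mul_comm] at this
    have hwz : w * z ∈ (p₀ ⊓ q₀) • J := by
      have := Submodule.smul_mem_smul hw hz
      simpa using this
    have hz' : z = μ * z + w * z := by rw [← add_mul, hμw, one_mul]
    rw [hz']
    exact Submodule.mem_sup.mpr ⟨μ * z, hμz, w * z, hwz, rfl⟩
  have hJc : J ≤ Ideal.span {c} :=
    Submodule.le_of_le_smul_of_le_jacobson_bot hJfg hjac hkey
  have hJceq : ∀ x ∈ J, ∃ r : R, r * c = x := fun x hx =>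
    Ideal.mem_span_singleton'.mp (hJc hx)
  -- regularity of c
  set π : R →ₗ[R] ↥J := LinearMap.toSpanSingleton R ↥J ⟨c, hcJ⟩ with hπdef
  have hπsurj : Function.Surjective π := by
    rintro ⟨z, hz⟩
    obtain ⟨r, hr⟩ := hJceq z hz
    refine ⟨r, Subtype.ext ?_⟩
    simpa [hπdef, LinearMap.toSpanSingleton_apply] using hr
  obtain ⟨h, hh⟩ := Module.projective_lifting_property π LinearMap.id hπsurj
  have hπh : ∀ z : ↥J, h z * c = (z : R) := by
    intro z
    have h1 := congrArg (fun g => g z) hh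
    simp only [LinearMap.comp_apply, LinearMap.id_apply] at h1
    have h2 := congrArg (Subtype.val) h1
    simpa [hπdef, LinearMap.toSpanSingleton_apply] using h2
  set ε := 1 - h ⟨c, hcJ⟩ with hεdef
  have hεc : ε * c = 0 := by rw [hεdef, sub_mul, one_mul, hπh, sub_self]
  have hann : ∀ r : R, r * c = 0 → r * ε = r := by
    intro r hr
    rw [hεdef, mul_sub, mul_one]
    have h0 : r • (⟨c, hcJ⟩ : ↥J) = 0 := Subtype.ext (by simpa using hr)
    have h2 : r * h ⟨c, hcJ⟩ = h (r • ⟨c, hcJ⟩) := by rw [map_smul]; simp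
    rw [h2, h0, map_zero, sub_zero]
  have hεJ : ∀ x ∈ J, ε * x = 0 := by
    intro x hx
    obtain ⟨r, hr⟩ := hJceq x hx
    rw [← hr]
    calc ε * (r * c) = r * (ε * c) := by ring
      _ = 0 := by rw [hεc, mul_zero]
  have hεidem : ε * ε = ε := hann ε hεc
  have hε0 : ε = 0 := by
    obtain ⟨n, hn⟩ := hC1 ε hεJ
    have hpow : ∀ k : ℕ, ε ^ (k + 1) = ε := by
      intro k
      induction k with
      | zero => simp
      | succ k ih => rw [pow_succ, ih, hεidem]
    cases n with
    | zero => simp at hn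
    | succ k => rw [hpow k] at hn; exact hn
  have hcreg : ∀ r : R, r * c = 0 → r = 0 := by
    intro r hr
    rw [← hann r hr, hε0, mul_zero]
  -- d = u * c
  obtain ⟨u, hu⟩ := hJceq (a - τ a) (delta_mem_iideal τ a)
  -- quotient side
  set J' := iideal τ' with hJ'def
  set c' := ψ c with hc'def
  have hc'J' : c' ∈ J' := by
    rw [hc'def, hcdef, map_sub, hψτ]
    exact delta_mem_iideal τ' (ψ b₀)
  have hJ'c' : ∀ x ∈ J', ∃ r : R', r * c' = x := by
    have hle : J' ≤ Ideal.span {c'} := by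
      rw [hJ'def, iideal, Ideal.span_le]
      rintro _ ⟨y, rfl⟩
      obtain ⟨x, v, hv, hfixv, rfl⟩ := hsurjψ y
      simp only [SetLike.mem_coe]
      have hδ : v * ψ x - τ' (v * ψ x) = v * ψ (x - τ x) := by
        rw [map_mul, hfixv, ← hψτ, map_sub, mul_sub]
      rw [hδ]
      obtain ⟨r, hr⟩ := hJceq (x - τ x) (delta_mem_iideal τ x)
      rw [← hr, map_mul]
      rw [Ideal.mem_span_singleton']
      exact ⟨v * ψ r, by rw [hc'def]; ring⟩
    exact fun x hx => Ideal.mem_span_singleton'.mp (hle hx)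
  -- regularity of c'
  set π' : R' →ₗ[R'] ↥J' := LinearMap.toSpanSingleton R' ↥J' ⟨c', hc'J'⟩ with hπ'def
  have hπ'surj : Function.Surjective π' := by
    rintro ⟨z, hz⟩
    obtain ⟨r, hr⟩ := hJ'c' z hz
    refine ⟨r, Subtype.ext ?_⟩
    simpa [hπ'def, LinearMap.toSpanSingleton_apply] using hr
  obtain ⟨h', hh'⟩ := Module.projective_lifting_property π' LinearMap.id hπ'surj
  have hπ'h : ∀ z : ↥J', h' z * c' = (z : R') := by
    intro z
    have h1 := congrArg (fun g => g z) hh'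
    simp only [LinearMap.comp_apply, LinearMap.id_apply] at h1
    have h2 := congrArg (Subtype.val) h1
    simpa [hπ'def, LinearMap.toSpanSingleton_apply] using h2
  set ε' := 1 - h' ⟨c', hc'J'⟩ with hε'def
  have hε'c : ε' * c' = 0 := by rw [hε'def, sub_mul, one_mul, hπ'h, sub_self]
  have hann' : ∀ r : R', r * c' = 0 → r * ε' = r := by
    intro r hr
    rw [hε'def, mul_sub, mul_one]
    have h0 : r • (⟨c', hc'J'⟩ : ↥J') = 0 := Subtype.ext (by simpa using hr)
    have h2 : r * h' ⟨c', hc'J'⟩ = h' (r • ⟨c', hc'J'⟩) := by rw [map_smul]; simp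
    rw [h2, h0, map_zero, sub_zero]
  have hε'J : ∀ x ∈ J', ε' * x = 0 := by
    intro x hx
    obtain ⟨r, hr⟩ := hJ'c' x hx
    rw [← hr]
    calc ε' * (r * c') = r * (ε' * c') := by ring
      _ = 0 := by rw [hε'c, mul_zero]
  have hε'idem : ε' * ε' = ε' := hann' ε' hε'c
  have hε'0 : ε' = 0 := by
    obtain ⟨n, hn⟩ := hQC1 ε' hε'J
    have hpow : ∀ k : ℕ, ε' ^ (k + 1) = ε' := by
      intro k
      induction k with
      | zero => simp
      | succ k ih => rw [pow_succ, ih, hε'idem]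
    cases n with
    | zero =>
      -- ε'^0 = 1 = 0 : R' is trivial, so ε' = 0 anyway
      simp only [pow_zero] at hn
      calc ε' = ε' * 1 := by rw [mul_one]
        _ = ε' * 0 := by rw [hn]
        _ = 0 := by rw [mul_zero]
    | succ k => rw [hpow k] at hn; exact hn
  have hc'reg : ∀ r : R', r * c' = 0 → r = 0 := by
    intro r hr
    rw [← hann' r hr, hε'0, mul_zero]
  -- u ∈ K
  have hψd : ψ (a - τ a) = 0 := (hker _).mpr hd
  have hu0 : ψ u = 0 := by
    apply hc'reg
    rw [hc'def, ← map_mul, hu, hψd]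
  have huK : u ∈ K := (hker u).mp hu0
  -- τ u = u
  have hτu : τ u = u := by
    have h1 : τ u * τ c = τ a - a := by
      rw [← map_mul, hu, map_sub, hτ]
    rw [hτc] at h1
    have h2 : (τ u - u) * c = 0 := by
      have h3 : u * c = a - τ a := hu
      calc (τ u - u) * c = -(τ u * -c) - u * c := by ring
        _ = -(τ a - a) - (a - τ a) := by rw [h1, h3]
        _ = 0 := by ring
    have := hcreg _ h2
    have h4 : τ u = u := by
      have := sub_eq_zero.mp this
      exact this
    exact h4
  refine ⟨u * b₀, K.mul_mem_right b₀ huK, ?_⟩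
  rw [map_mul, hτu]
  calc u * b₀ - u * τ b₀ = u * (b₀ - τ b₀) := by ring
    _ = a - τ a := by rw [← hcdef, hu]

end Core
section Orbit

variable {R : Type*} [CommRing R] (τ : R →+* R) (hτ : ∀ x, τ (τ x) = x)

include hτ in
lemma integral_fixedSubring : Algebra.IsIntegral (fixedSubring τ) R := by
  constructor
  intro z
  have hnm : τ (z * τ z) = z * τ z := by rw [map_mul, hτ]; ring
  have htr : τ (z + τ z) = z + τ z := by rw [map_add, hτ]; ring
  set nm : fixedSubring τ := ⟨z * τ z, hnm⟩ with hnmdef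
  set tr : fixedSubring τ := ⟨z + τ z, htr⟩ with htrdef
  refine ⟨Polynomial.X ^ 2 + (Polynomial.C nm - Polynomial.C tr * Polynomial.X), ?_, ?_⟩
  · apply Polynomial.monic_X_pow_add
    have hd1 : (Polynomial.C nm - Polynomial.C tr * Polynomial.X :
        Polynomial (fixedSubring τ)).degree ≤ 1 := by
      apply le_trans (Polynomial.degree_sub_le _ _)
      apply max_le
      · exact le_trans Polynomial.degree_C_le (by norm_num)
      · apply le_trans (Polynomial.degree_mul_le _ _)
        calc (Polynomial.C tr : Polynomial (fixedSubring τ)).degree + Polynomial.X.degree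
            ≤ 0 + 1 := add_le_add Polynomial.degree_C_le Polynomial.degree_X_le
          _ = 1 := by norm_num
    exact lt_of_le_of_lt hd1 (by norm_num)
  · simp only [Polynomial.eval₂_add, Polynomial.eval₂_sub, Polynomial.eval₂_mul,
      Polynomial.eval₂_pow, Polynomial.eval₂_X, Polynomial.eval₂_C]
    have h1 : algebraMap (fixedSubring τ) R tr = z + τ z := rfl
    have h2 : algebraMap (fixedSubring τ) R nm = z * τ z := rfl
    rw [h1, h2]
    ring

include hτ in
lemma maximal_orbit_of_local (hloc : IsLocalRing (fixedSubring τ)) :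
    ∀ p q : Ideal R, p.IsMaximal → q.IsMaximal → q = p ∨ q = p.comap τ := by
  haveI := integral_fixedSubring τ hτ
  have hcomapF : ∀ (q : Ideal R), q.IsMaximal →
      q.comap (algebraMap (fixedSubring τ) R) = IsLocalRing.maximalIdeal (fixedSubring τ) := by
    intro q hq
    haveI := hq
    have hm : (q.comap (algebraMap (fixedSubring τ) R)).IsMaximal :=
      Ideal.isMaximal_comap_of_isIntegral_of_isMaximal q
    exact IsLocalRing.eq_maximalIdeal hm
  intro p q hp hq
  have hsubset : ∀ z ∈ q, z ∈ p ∨ z ∈ p.comap τ := by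
    intro z hz
    have hnorm : z * τ z ∈ q := q.mul_mem_right _ hz
    have hfix : τ (z * τ z) = z * τ z := by rw [map_mul, hτ]; ring
    have hmemF : (⟨z * τ z, hfix⟩ : fixedSubring τ) ∈
        q.comap (algebraMap (fixedSubring τ) R) := by
      simp only [Ideal.mem_comap]
      exact hnorm
    rw [hcomapF q hq, ← hcomapF p hp] at hmemF
    have hpmem : z * τ z ∈ p := hmemF
    rcases hp.isPrime.mem_or_mem hpmem with h | h
    · exact Or.inl h
    · exact Or.inr h
  by_cases h1 : q ≤ p
  · left; exact hq.eq_of_le hp.ne_top h1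
  · right
    refine hq.eq_of_le (Ideal.comap_isMaximal_of_surjective τ (fun y => ⟨τ y, hτ y⟩)).ne_top ?_
    intro z hz
    rcases hsubset z hz with hzp | hzp'
    · obtain ⟨z₀, hz₀q, hz₀p⟩ := SetLike.not_le_iff_exists.mp h1
      have hz₀p' : z₀ ∈ p.comap τ := by
        rcases hsubset z₀ hz₀q with h | h
        · exact absurd h hz₀p
        · exact h
      rcases hsubset (z + z₀) (q.add_mem hz hz₀q) with h2 | h2
      · exfalso
        apply hz₀p
        have := p.sub_mem h2 hzp
        simpa using this
      · have := (p.comap τ).sub_mem h2 hz₀p'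
        simpa using this
    · exact hzp'

end Orbit

set_option maxHeartbeats 2000000 in
/-- Let `σ` be an involution of a finitely generated algebra `A` over a field `k`, and `I` a
`σ`-stable ideal, with induced involution `σ̄` on `A ⧸ I`.  If both `(A, σ)` and
`(A ⧸ I, σ̄)` are pure (the ideals `I_A` and `I_{A/I}` are invertible), then the induced
homomorphism `A^σ → (A/I)^{σ̄}` is surjective: every `σ̄`-fixed element of `A ⧸ I` lifts to a
`σ`-fixed element of `A`. -/
theorem fixed_elements_lift_of_pure_quotient
    {k : Type*} [Field k] {A : Type*} [CommRing A] [Algebra k A] [Algebra.FiniteType k A]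
    (σ : A →ₐ[k] A) (hσ : ∀ a : A, σ (σ a) = a)
    (I : Ideal A) (hI : I.map σ.toRingHom = I)
    (σbar : (A ⧸ I) →+* (A ⧸ I))
    (hσbar : ∀ a : A, σbar (Ideal.Quotient.mk I a) = Ideal.Quotient.mk I (σ a))
    (hpureA : IsInvertibleIdeal (iideal σ.toRingHom))
    (hpureQ : IsInvertibleIdeal (iideal σbar)) :
    ∀ y : A ⧸ I, σbar y = y → ∃ x : A, σ x = x ∧ Ideal.Quotient.mk I x = y := by
  classical
  rcases subsingleton_or_nontrivial A with hns | hnt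
  · intro y hy
    haveI : Subsingleton (A ⧸ I) := Function.Surjective.subsingleton Ideal.Quotient.mk_surjective
    exact ⟨0, by rw [map_zero], Subsingleton.elim _ _⟩
  intro y hy
  obtain ⟨a, rfl⟩ := Ideal.Quotient.mk_surjective y
  set σr : A →+* A := σ.toRingHom with hσrdef
  have hσrr : ∀ x, σr (σr x) = x := hσ
  have hσI : ∀ x ∈ I, σr x ∈ I := fun x hx => by
    rw [← hI]; exact Ideal.mem_map_of_mem _ hx
  have hd : a - σr a ∈ I := by
    have h1 : Ideal.Quotient.mk I (σ a) = Ideal.Quotient.mk I a := by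
      rw [← hσbar]; exact hy
    have h2 : σ a - a ∈ I := Ideal.Quotient.eq.mp h1
    have := I.neg_mem h2
    rw [neg_sub] at this; exact this
  -- global data over A
  haveI hfinA : Module.Finite A ↥(iideal σr) := hpureA.1
  haveI hprojA : Module.Projective A ↥(iideal σr) := hpureA.2.1
  have hrankA := hpureA.2.2
  obtain ⟨sA, hsA⟩ := iideal_fg_delta σr (Module.Finite.iff_fg.mp hpureA.1)
  have hC1A : ∀ r : A, (∀ x ∈ iideal σr, r * x = 0) → IsNilpotent r :=
    annihilator_nilpotent_of_rankOne (iideal σr) hrankA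
  have hswapA : ∀ (f : ↥(iideal σr) →ₗ[A] A) (x y : ↥(iideal σr)), f x • y = f y • x :=
    swap_of_rankOne (iideal σr) hrankA
  obtain ⟨nA, xsA, fsA, hdbA⟩ := exists_dual_basis (A := A) (M := ↥(iideal σr))
  have hsymA : ∀ u v : ↥(iideal σr), u ⊗ₜ[A] v = v ⊗ₜ[A] u :=
    sym_of_swap (iideal σr) xsA fsA hdbA hswapA
  -- global data over A ⧸ I
  haveI hfinQ : Module.Finite (A ⧸ I) ↥(iideal σbar) := hpureQ.1
  haveI hprojQ : Module.Projective (A ⧸ I) ↥(iideal σbar) := hpureQ.2.1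
  obtain ⟨sQ, hsQ⟩ := iideal_fg_delta σbar (Module.Finite.iff_fg.mp hpureQ.1)
  have hC1Q : ∀ r : A ⧸ I, (∀ x ∈ iideal σbar, r * x = 0) → IsNilpotent r :=
    annihilator_nilpotent_of_rankOne (iideal σbar) hpureQ.2.2
  -- B-module set-up
  set B := fixedSubring σr with hBdef
  have hBfix : ∀ b : B, σr (b : A) = (b : A) := fun b => b.2
  set σlin : A →ₗ[B] A :=
    { toFun := σr
      map_add' := map_add σr
      map_smul' := fun b x => by
        simp only [RingHom.id_apply]
        show σr ((b : A) * x) = (b : A) * σr x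
        rw [map_mul, hBfix] } with hσlin
  set N : Submodule B A := Submodule.map (LinearMap.id - σlin) (I.restrictScalars B) with hNdef
  suffices hmem : a - σr a ∈ N by
    obtain ⟨t, htI, ht⟩ := hmem
    have htI' : t ∈ I := htI
    have ht' : t - σr t = a - σr a := by
      rw [← ht, LinearMap.sub_apply, LinearMap.id_apply]
      rfl
    refine ⟨a - t, ?_, ?_⟩
    · have h1 : σr t = t - (a - σr a) := by rw [← ht']; ring
      show σr (a - t) = a - t
      rw [map_sub, h1]; ring
    · have h0 : Ideal.Quotient.mk I t = 0 := Ideal.Quotient.eq_zero_iff_mem.mpr htI'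
      rw [map_sub, h0, sub_zero]
  -- localize at maximal ideals of B
  apply Submodule.mem_of_localization_maximal
    (fun (P : Ideal B) (_ : P.IsMaximal) => LocalizedModule P.primeCompl A)
    (fun (P : Ideal B) (_ : P.IsMaximal) => LocalizedModule.mkLinearMap P.primeCompl A)
  intro P hP
  set S := P.primeCompl with hSdef
  set Sa := Algebra.algebraMapSubmonoid A S with hSadef
  set R := Localization Sa with hRdef
  have hSafix : ∀ t ∈ Sa, σr t = t := by
    rintro _ ⟨b, hb, rfl⟩
    exact hBfix b
  have h0Sa : (0 : A) ∉ Sa := by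
    rintro ⟨b, hb, hb0⟩
    have hb' : b = 0 := Subtype.ext hb0
    rw [hb'] at hb
    exact hb P.zero_mem
  -- the involution on R
  have hle : Sa ≤ Sa.comap σr := by
    intro t ht
    simp only [Submonoid.mem_comap]
    rw [hSafix t ht]; exact ht
  set τ : R →+* R := IsLocalization.map (M := Sa) (T := Sa) R σr hle with hτdef
  have hτalg : ∀ x : A, τ (algebraMap A R x) = algebraMap A R (σr x) :=
    fun x => IsLocalization.map_eq hle x
  have hττ : ∀ z : R, τ (τ z) = z := by
    have hcomp : (τ.comp τ) = RingHom.id R := by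
      apply IsLocalization.ringHom_ext Sa
      ext x
      simp only [RingHom.coe_comp, Function.comp_apply, RingHom.id_apply, RingHomCompTriple.comp_apply]
      rw [hτalg, hτalg, hσrr]
    intro z
    have := congrArg (fun f => f z) hcomp
    simpa using this
  haveI hRnt : Nontrivial R := by
    rcases subsingleton_or_nontrivial R with hsub | hnt
    · exfalso
      have h10 : (algebraMap A R) 1 = algebraMap A R 0 := Subsingleton.elim _ _
      obtain ⟨u, hu⟩ := (IsLocalization.eq_iff_exists Sa R).mp h10
      simp only [mul_one, mul_zero] at hu
      exact h0Sa (hu ▸ u.2)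
    · exact hnt
  -- canonical form of fixed elements of R
  have hfixedform : ∀ z : R, τ z = z →
      ∃ (x : A) (t : Sa), σr x = x ∧ algebraMap A R (t : A) * z = algebraMap A R x := by
    intro z hz
    obtain ⟨⟨x₀, t₀⟩, rfl⟩ := IsLocalization.mk'_surjective Sa z
    have hspec : algebraMap A R (t₀ : A) * IsLocalization.mk' R x₀ t₀ = algebraMap A R x₀ := by
      rw [mul_comm]; exact IsLocalization.mk'_spec R x₀ t₀
    have happ : algebraMap A R (t₀ : A) * τ (IsLocalization.mk' R x₀ t₀)
        = algebraMap A R (σr x₀) := by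
      have h2 := congrArg τ hspec
      rw [map_mul, hτalg, hτalg, hSafix _ t₀.2] at h2
      exact h2
    rw [hz] at happ
    have heq : algebraMap A R (σr x₀) = algebraMap A R x₀ := by rw [← happ, hspec]
    obtain ⟨u, hu⟩ := (IsLocalization.eq_iff_exists Sa R).mp heq
    refine ⟨(u : A) * x₀, u * t₀, ?_, ?_⟩
    · rw [map_mul, hSafix _ u.2, hu]
    · calc algebraMap A R ((u * t₀ : Sa) : A) * IsLocalization.mk' R x₀ t₀
          = algebraMap A R (u : A) * (algebraMap A R (t₀ : A) * IsLocalization.mk' R x₀ t₀) := by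
            rw [show ((u * t₀ : Sa) : A) = (u : A) * (t₀ : A) from rfl, map_mul]; ring
        _ = algebraMap A R (u : A) * algebraMap A R x₀ := by rw [hspec]
        _ = algebraMap A R ((u : A) * x₀) := by rw [map_mul]
  -- the fixed subring of R is local
  set F := fixedSubring τ with hFdef
  haveI hFnt : Nontrivial F := by
    refine ⟨⟨0, map_zero τ⟩, ⟨1, map_one τ⟩, ?_⟩
    intro hcon
    have := congrArg Subtype.val hcon
    exact zero_ne_one this
  have hunitF : ∀ (ζ : R) (hζ : τ ζ = ζ) (x : A) (hx : σr x = x) (t : Sa)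
      (hxt : algebraMap A R (t : A) * ζ = algebraMap A R x),
      ((⟨x, hx⟩ : B) ∉ P) → IsUnit (⟨ζ, hζ⟩ : F) := by
    intro ζ hζ x hx t hxt hxP
    have hxSa : x ∈ Sa := ⟨⟨x, hx⟩, hxP, rfl⟩
    have hxu : IsUnit (algebraMap A R x) := IsLocalization.map_units R (⟨x, hxSa⟩ : Sa)
    have htu : IsUnit (algebraMap A R (t : A)) := IsLocalization.map_units R t
    obtain ⟨w, hw⟩ := hxu.exists_left_inv
    set v : R := w * algebraMap A R (t : A) with hvdef
    have hζv : ζ * v = 1 := by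
      calc ζ * v = w * (algebraMap A R (t : A) * ζ) := by rw [hvdef]; ring
        _ = w * algebraMap A R x := by rw [hxt]
        _ = 1 := hw
    have hwfix : τ w = w := by
      have h1 : τ w * algebraMap A R x = 1 := by
        have := congrArg τ hw
        rw [map_mul, hτalg, hx, map_one] at this
        exact this
      calc τ w = τ w * 1 := by rw [mul_one]
        _ = τ w * (algebraMap A R x * w) := by
            rw [show algebraMap A R x * w = 1 from by rw [mul_comm]; exact hw]
        _ = (τ w * algebraMap A R x) * w := by ring
        _ = w := by rw [h1, one_mul]
    have hvfix : τ v = v := by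
      rw [hvdef, map_mul, hwfix, hτalg, hSafix _ t.2]
    refine IsUnit.of_mul_eq_one (⟨v, hvfix⟩ : F) ?_
    exact Subtype.ext hζv
  haveI hlocalF : IsLocalRing F := by
    apply IsLocalRing.of_isUnit_or_isUnit_one_sub_self
    intro ξ
    obtain ⟨x, t, hxfix, hxt⟩ := hfixedform (ξ : R) ξ.2
    obtain ⟨t₀, ht₀S, ht₀⟩ := t.2
    by_cases hxP : (⟨x, hxfix⟩ : B) ∈ P
    · right
      have hfix1 : τ (1 - (ξ : R)) = 1 - (ξ : R) := by
        rw [map_sub, map_one, ξ.2]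
      have hx' : σr ((t : A) - x) = (t : A) - x := by
        rw [map_sub, hSafix _ t.2, hxfix]
      have hxt' : algebraMap A R (t : A) * (1 - (ξ : R)) = algebraMap A R ((t : A) - x) := by
        rw [mul_sub, mul_one, hxt, map_sub]
      have hne : (⟨(t : A) - x, hx'⟩ : B) ∉ P := by
        intro hmem
        apply ht₀S
        have hrw : (⟨(t : A) - x, hx'⟩ : B) = t₀ - ⟨x, hxfix⟩ := by
          apply Subtype.ext
          show (t : A) - x = (t₀ : A) - x
          rw [← ht₀]
          rfl
        rw [hrw] at hmem
        have := P.add_mem hmem hxP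
        simpa using this
      have := hunitF (1 - (ξ : R)) hfix1 ((t : A) - x) hx' t hxt' hne
      have hrw2 : (⟨1 - (ξ : R), hfix1⟩ : F) = 1 - ξ := rfl
      rwa [hrw2] at this
    · left
      have := hunitF (ξ : R) ξ.2 x hxfix t hxt hxP
      have hrw2 : (⟨(ξ : R), ξ.2⟩ : F) = ξ := rfl
      rwa [hrw2] at this
  have hmaxR : ∀ p q : Ideal R, p.IsMaximal → q.IsMaximal → q = p ∨ q = p.comap τ :=
    maximal_orbit_of_local τ hττ hlocalF
  -- transfers A → R
  have hsurjR := loc_hsurj Sa σr τ hτalg hSafix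
  have hzeroR := loc_hzero (A := A) (A' := R) Sa
  have hC1R : ∀ r : R, (∀ x ∈ iideal τ, r * x = 0) → IsNilpotent r :=
    c1_transfer σr τ hτalg hsurjR hzeroR sA hsA hC1A
  have hsymR : ∀ u v : ↥(iideal τ), u ⊗ₜ[R] v = v ⊗ₜ[R] u :=
    sym_transfer σr τ hτalg hsurjR hsymA
  have hswapR := swap_of_sym (iideal τ) hsymR
  obtain ⟨sR, hsR⟩ := iideal_span_transfer σr τ hτalg hsurjR sA hsA
  haveI hprojR : Module.Projective R ↥(iideal τ) := proj_transfer Sa σr τ hτalg hSafix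
  -- the localized ideal K
  set K : Ideal R := Submodule.localized' R Sa (Algebra.linearMap A R) I with hKdef
  have hmemK : ∀ z : R, z ∈ K ↔ ∃ q ∈ I, ∃ t : Sa,
      algebraMap A R (t : A) * z = algebraMap A R q :=
    fun z => mem_localizedIdeal_iff Sa I z
  have hKτ : ∀ z ∈ K, τ z ∈ K := by
    intro z hz
    rw [hmemK] at hz
    rw [hmemK]
    obtain ⟨q, hq, t, ht⟩ := hz
    refine ⟨σr q, hσI q hq, t, ?_⟩
    have h2 := congrArg τ ht
    rw [map_mul, hτalg, hSafix _ t.2, hτalg] at h2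
    exact h2
  -- the quotient localization R'
  set T : Submonoid (A ⧸ I) := Submonoid.map (Ideal.Quotient.mk I) Sa with hTdef
  set R' := Localization T with hR'def
  have hleT : Sa ≤ T.comap (Ideal.Quotient.mk I) := fun t ht => Submonoid.mem_map_of_mem _ ht
  set ψ : R →+* R' := IsLocalization.map (M := Sa) (T := T) R' (Ideal.Quotient.mk I) hleT
    with hψdef
  have hψalg : ∀ x : A, ψ (algebraMap A R x) = algebraMap (A ⧸ I) R' (Ideal.Quotient.mk I x) :=
    fun x => IsLocalization.map_eq hleT x
  have hTfix : ∀ t ∈ T, σbar t = t := by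
    rintro _ ⟨t, htSa, rfl⟩
    rw [hσbar]
    exact congrArg _ (hSafix t htSa)
  have hleT' : T ≤ T.comap σbar := by
    intro t ht
    simp only [Submonoid.mem_comap]
    rw [hTfix t ht]; exact ht
  set τ' : R' →+* R' := IsLocalization.map (M := T) (T := T) R' σbar hleT' with hτ'def
  have hτ'alg : ∀ x : A ⧸ I, τ' (algebraMap (A ⧸ I) R' x) = algebraMap (A ⧸ I) R' (σbar x) :=
    fun x => IsLocalization.map_eq hleT' x
  have hψτcomm : ∀ z : R, ψ (τ z) = τ' (ψ z) := by
    have hcomp : ψ.comp τ = τ'.comp ψ := by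
      apply IsLocalization.ringHom_ext Sa
      ext x
      simp only [RingHom.coe_comp, Function.comp_apply]
      rw [hτalg, hψalg, hψalg, hτ'alg, hσbar]
      rfl
    intro z
    have := congrArg (fun f => f z) hcomp
    simpa using this
  have hkerψ : ∀ z : R, ψ z = 0 ↔ z ∈ K := by
    intro z
    constructor
    · intro h0
      obtain ⟨⟨x, t⟩, rfl⟩ := IsLocalization.mk'_surjective Sa z
      have hspec : algebraMap A R (t : A) * IsLocalization.mk' R x t = algebraMap A R x := by
        rw [mul_comm]; exact IsLocalization.mk'_spec R x t
      have h1 : ψ (algebraMap A R x) = 0 := by rw [← hspec, map_mul, h0, mul_zero]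
      rw [hψalg] at h1
      obtain ⟨u, hu⟩ := (IsLocalization.map_eq_zero_iff T R' _).mp h1
      obtain ⟨u₀, hu₀Sa, hu₀⟩ := u.2
      have hIm : u₀ * x ∈ I := by
        rw [← Ideal.Quotient.eq_zero_iff_mem, map_mul, hu₀]
        exact hu
      rw [hmemK]
      refine ⟨u₀ * x, hIm, (⟨u₀, hu₀Sa⟩ : Sa) * t, ?_⟩
      have hcoe : (((⟨u₀, hu₀Sa⟩ : Sa) * t : Sa) : A) = u₀ * (t : A) := rfl
      rw [hcoe, map_mul]
      calc algebraMap A R u₀ * algebraMap A R (t : A) * IsLocalization.mk' R x t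
          = algebraMap A R u₀ * (algebraMap A R (t : A) * IsLocalization.mk' R x t) := by ring
        _ = algebraMap A R u₀ * algebraMap A R x := by rw [hspec]
        _ = algebraMap A R (u₀ * x) := (map_mul (algebraMap A R) u₀ x).symm
    · intro hzK
      rw [hmemK] at hzK
      obtain ⟨q, hq, t, ht⟩ := hzK
      have h1 : ψ (algebraMap A R (t : A)) * ψ z = ψ (algebraMap A R q) := by
        rw [← map_mul, ht]
      rw [hψalg, hψalg] at h1
      have hq0 : Ideal.Quotient.mk I q = 0 := Ideal.Quotient.eq_zero_iff_mem.mpr hq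
      rw [hq0, map_zero] at h1
      have hu : IsUnit (algebraMap (A ⧸ I) R' (Ideal.Quotient.mk I (t : A))) :=
        IsLocalization.map_units R'
          (⟨Ideal.Quotient.mk I (t : A), Submonoid.mem_map_of_mem _ t.2⟩ : T)
      obtain ⟨w, hw⟩ := hu.exists_left_inv
      calc ψ z = (w * algebraMap (A ⧸ I) R' (Ideal.Quotient.mk I (t : A))) * ψ z := by
            rw [hw, one_mul]
        _ = w * (algebraMap (A ⧸ I) R' (Ideal.Quotient.mk I (t : A)) * ψ z) := by ring
        _ = 0 := by rw [h1, mul_zero]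
  have hsurjR' := loc_hsurj T σbar τ' hτ'alg hTfix
  have hsurjψ : ∀ z : R', ∃ (y : R) (v : R'), IsUnit v ∧ τ' v = v ∧ z = v * ψ y := by
    intro z
    obtain ⟨yb, v, hv, hvfix, hz⟩ := hsurjR' z
    obtain ⟨yA, rfl⟩ := Ideal.Quotient.mk_surjective yb
    exact ⟨algebraMap A R yA, v, hv, hvfix, by rw [hz, hψalg]⟩
  have hzeroR' := loc_hzero (A := A ⧸ I) (A' := R') T
  have hC1R' : ∀ r : R', (∀ x ∈ iideal τ', r * x = 0) → IsNilpotent r :=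
    c1_transfer σbar τ' hτ'alg hsurjR' hzeroR' sQ hsQ hC1Q
  haveI hprojR' : Module.Projective R' ↥(iideal τ') := proj_transfer T σbar τ' hτ'alg hTfix
  -- apply the core lemma
  have hdK : algebraMap A R a - τ (algebraMap A R a) ∈ K := by
    rw [hτalg, ← map_sub, hmemK]
    exact ⟨a - σr a, hd, 1, by rw [show ((1 : Sa) : A) = 1 from rfl, map_one, one_mul]⟩
  obtain ⟨t, htK, htd⟩ := core_lift τ hττ hmaxR sR hsR hprojR hC1R hswapR K hKτ
    ψ τ' hψτcomm hkerψ hsurjψ hprojR' hC1R' (algebraMap A R a) hdK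
  -- extract the localized membership
  rw [hmemK] at htK
  obtain ⟨i, hiI, t₁, ht₁⟩ := htK
  have ht₂ : algebraMap A R (t₁ : A) * τ t = algebraMap A R (σr i) := by
    have h2 := congrArg τ ht₁
    rw [map_mul, hτalg, hSafix _ t₁.2, hτalg] at h2
    exact h2
  have ht₃ : algebraMap A R ((t₁ : A) * (a - σr a)) = algebraMap A R (i - σr i) := by
    rw [map_mul, map_sub, map_sub]
    calc algebraMap A R (t₁ : A) * (algebraMap A R a - algebraMap A R (σr a))
        = algebraMap A R (t₁ : A) * (t - τ t) := by rw [← hτalg, ← htd]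
      _ = algebraMap A R (t₁ : A) * t - algebraMap A R (t₁ : A) * τ t := by ring
      _ = algebraMap A R i - algebraMap A R (σr i) := by rw [ht₁, ht₂]
  obtain ⟨u, hu⟩ := (IsLocalization.eq_iff_exists Sa R).mp ht₃
  obtain ⟨u₀, hu₀S, hu₀⟩ := u.2
  obtain ⟨t₀, ht₀S, ht₀⟩ := t₁.2
  have hc1 : algebraMap B A (u₀ * t₀) * (a - σr a) = algebraMap B A u₀ * (i - σr i) := by
    rw [map_mul]
    calc algebraMap B A u₀ * algebraMap B A t₀ * (a - σr a)
        = (u : A) * ((t₁ : A) * (a - σr a)) := by rw [hu₀, ht₀]; ring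
      _ = (u : A) * (i - σr i) := hu
      _ = algebraMap B A u₀ * (i - σr i) := by rw [hu₀]
  have hmN : algebraMap B A u₀ * (i - σr i) ∈ N := by
    rw [hNdef]
    refine ⟨algebraMap B A u₀ * i, ?_, ?_⟩
    · show algebraMap B A u₀ * i ∈ I
      exact I.mul_mem_left _ hiI
    · show algebraMap B A u₀ * i - σr (algebraMap B A u₀ * i)
        = algebraMap B A u₀ * (i - σr i)
      rw [map_mul]
      rw [show σr (algebraMap B A u₀) = algebraMap B A u₀ from hBfix u₀]
      ring
  rw [Submodule.mem_localized₀]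
  refine ⟨algebraMap B A u₀ * (i - σr i), hmN,
    ⟨u₀ * t₀, Submonoid.mul_mem _ hu₀S ht₀S⟩, ?_⟩
  have hsm : algebraMap B A u₀ * (i - σr i)
      = ((⟨u₀ * t₀, Submonoid.mul_mem _ hu₀S ht₀S⟩ : S) : B) • (a - σr a) := by
    rw [Algebra.smul_def]
    exact hc1.symm
  rw [hsm]
  have hgen : ∀ (sf : S) (m : A), IsLocalizedModule.mk' (LocalizedModule.mkLinearMap S A)
      (((sf : B)) • m) sf = LocalizedModule.mkLinearMap S A m := by
    intro sf m
    rw [IsLocalizedModule.mk'_smul]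
    exact IsLocalizedModule.mk'_cancel' (LocalizedModule.mkLinearMap S A) m sf
  exact hgen _ _
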